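/- Let U be a d×r real matrix with orthonormal columns, let y = x + v where x lies in the column span of U and v is orthogonal to the column span of U, and let Ω be any list of m indices from [d]. If U_Ω^T U_Ω is invertible, then ‖v_Ω‖₂² − ‖(U_Ω^T U_Ω)^{-1}‖₂·‖U_Ω^T v_Ω‖₂² ≤ ‖y_Ω − P_{U_Ω} y_Ω‖₂² ≤ ‖v_Ω‖₂². -/

import Mathlib

open Matrix
open scoped InnerProductSpace

/- Probability of an event under the uniform distribution on a finite type. -/
open scoped Classical in
noncomputable def unifProb {α : Type*} [Fintype α] (P : α → Prop) : ℝ :=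
  (Finset.univ.filter fun a => P a).card / Fintype.card α

/-- Squared Euclidean norm of a vector in ℝ^d. -/
def sq2 {d : ℕ} (x : Fin d → ℝ) : ℝ := ∑ i, x i ^ 2

/-- Vector coherence μ(v) = d·‖v‖∞²/‖v‖₂². -/
noncomputable def vecCoh {d : ℕ} (v : Fin d → ℝ) : ℝ :=
  ((d : ℝ) * ⨆ i, v i ^ 2) / sq2 v

/-- Coherence μ(U) = (d/r)·max_i ‖P_U e_i‖₂² of the column span of a d×r matrix U with
orthonormal columns; here ‖P_U e_i‖₂² = ∑ k (U i k)². -/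
noncomputable def matCoh {d r : ℕ} (U : Matrix (Fin d) (Fin r) ℝ) : ℝ :=
  ((d : ℝ) / r) * ⨆ i : Fin d, ∑ k, U i k ^ 2

/-- ‖y_Ω − P_{U_Ω} y_Ω‖₂²: squared norm of the residual of the orthogonal projection of the
subsampled vector y_Ω onto the column span of the subsampled matrix U_Ω. -/
noncomputable def projResidSq {d r m : ℕ} (U : Matrix (Fin d) (Fin r) ℝ)
    (y : Fin d → ℝ) (Ω : Fin m → Fin d) : ℝ :=
  let yΩ : EuclideanSpace ℝ (Fin m) := WithLp.toLp 2 fun j => y (Ω j)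
  let S : Submodule ℝ (EuclideanSpace ℝ (Fin m)) :=
    Submodule.span ℝ (Set.range fun k : Fin r => (WithLp.toLp 2 fun j => U (Ω j) k : EuclideanSpace ℝ (Fin m)))
  ‖yΩ - (S.orthogonalProjectionOnto yΩ : EuclideanSpace ℝ (Fin m))‖ ^ 2

/-- The row-subsampled matrix U_Ω whose j-th row is the Ω(j)-th row of U. -/
def subMat {d r m : ℕ} (U : Matrix (Fin d) (Fin r) ℝ) (Ω : Fin m → Fin d) :
    Matrix (Fin m) (Fin r) ℝ :=
  Matrix.of fun j k => U (Ω j) k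

/-- Spectral (ℓ2 operator) norm of a matrix. -/
noncomputable def specNorm {p q : ℕ} (M : Matrix (Fin p) (Fin q) ℝ) : ℝ :=
  ‖(Matrix.toEuclideanLin M).toContinuousLinearMap‖

/-- Deterministic sandwich for the projection residual: let U be a d×r matrix with orthonormal
columns, y = x + v with x in the column span of U and v orthogonal to it, and Ω any list of m
indices from [d].  If U_Ωᵀ·U_Ω is invertible, then
‖v_Ω‖₂² − ‖(U_Ωᵀ·U_Ω)⁻¹‖₂·‖U_Ωᵀ v_Ω‖₂² ≤ ‖y_Ω − P_{U_Ω} y_Ω‖₂² ≤ ‖v_Ω‖₂². -/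
theorem projection_residual_sandwich
    {d r m : ℕ} (U : Matrix (Fin d) (Fin r) ℝ) (hU : Uᵀ * U = 1)
    (x v y : Fin d → ℝ) (c : Fin r → ℝ) (hx : x = U.mulVec c)
    (hv : Uᵀ.mulVec v = 0) (hy : y = x + v)
    (Ω : Fin m → Fin d)
    (hinv : IsUnit ((subMat U Ω)ᵀ * subMat U Ω)) :
    (∑ j, v (Ω j) ^ 2) -
        specNorm ((subMat U Ω)ᵀ * subMat U Ω)⁻¹ * (∑ k, (∑ j, U (Ω j) k * v (Ω j)) ^ 2) ≤
      projResidSq U y Ω ∧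
      projResidSq U y Ω ≤ ∑ j, v (Ω j) ^ 2 := by
  classical
  set col : Fin r → EuclideanSpace ℝ (Fin m) := fun k => WithLp.toLp 2 (fun j => U (Ω j) k) with hcol
  set S : Submodule ℝ (EuclideanSpace ℝ (Fin m)) :=
    Submodule.span ℝ (Set.range col) with hSdef
  set xΩ : EuclideanSpace ℝ (Fin m) := WithLp.toLp 2 (fun j => x (Ω j)) with hxΩ
  set vΩ : EuclideanSpace ℝ (Fin m) := WithLp.toLp 2 (fun j => v (Ω j)) with hvΩ
  set yΩ : EuclideanSpace ℝ (Fin m) := WithLp.toLp 2 (fun j => y (Ω j)) with hyΩ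
  have sumApply : ∀ (f : Fin r → EuclideanSpace ℝ (Fin m)) (j : Fin m),
      (∑ k, f k) j = ∑ k, f k j := fun f j => by rw [WithLp.ofLp_sum]; exact Finset.sum_apply j Finset.univ _
  have hcolS : ∀ k, col k ∈ S := fun k => Submodule.subset_span ⟨k, rfl⟩
  -- membership of xΩ
  have hsum : ∑ k, c k • col k = xΩ := by
    ext j
    rw [sumApply]
    simp only [hxΩ, hcol, hx, Matrix.mulVec, dotProduct, PiLp.smul_apply, smul_eq_mul, PiLp.toLp_apply]
    exact Finset.sum_congr rfl fun k _ => mul_comm _ _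
  have hxS : xΩ ∈ S := (Submodule.mem_span_range_iff_exists_fun ℝ).2 ⟨c, hsum⟩
  have hres : projResidSq U y Ω
      = ‖yΩ - (S.orthogonalProjectionOnto yΩ : EuclideanSpace ℝ (Fin m))‖ ^ 2 := rfl
  have hyadd : yΩ = xΩ + vΩ := by
    ext j; simp [hyΩ, hy, hxΩ, hvΩ]
  set Pv : EuclideanSpace ℝ (Fin m) := (S.orthogonalProjectionOnto vΩ : EuclideanSpace ℝ (Fin m))
    with hPv
  have hPvS : Pv ∈ S := SetLike.coe_mem _
  have hresid : yΩ - (S.orthogonalProjectionOnto yΩ : EuclideanSpace ℝ (Fin m)) = vΩ - Pv := by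
    rw [hyadd, map_add]
    push_cast
    rw [← Submodule.starProjection_apply, Submodule.starProjection_eq_self_iff.2 hxS]
    abel
  have hperp : vΩ - Pv ∈ Sᗮ := S.sub_starProjection_mem_orthogonal vΩ
  have hinnerPv : ⟪vΩ - Pv, Pv⟫_ℝ = 0 :=
    (Submodule.mem_orthogonal' S _).1 hperp Pv hPvS
  have hpyth : ‖vΩ‖ ^ 2 = ‖vΩ - Pv‖ ^ 2 + ‖Pv‖ ^ 2 := by
    have h := norm_add_sq_real (vΩ - Pv) Pv
    rw [hinnerPv] at h
    have h2 : vΩ - Pv + Pv = vΩ := by abel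
    rw [h2] at h
    linarith
  have hnv : ‖vΩ‖ ^ 2 = ∑ j, v (Ω j) ^ 2 := by
    rw [← real_inner_self_eq_norm_sq, PiLp.inner_apply]
    exact Finset.sum_congr rfl fun j _ => by simp [hvΩ, sq]
  -- the Gram matrix
  set G := (subMat U Ω)ᵀ * subMat U Ω with hG
  have hGdet : IsUnit G.det := (Matrix.isUnit_iff_isUnit_det G).1 hinv
  set w : EuclideanSpace ℝ (Fin r) := WithLp.toLp 2 (fun k => ∑ j, U (Ω j) k * v (Ω j)) with hw
  have hnw : ‖w‖ ^ 2 = ∑ k, (∑ j, U (Ω j) k * v (Ω j)) ^ 2 := by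
    rw [← real_inner_self_eq_norm_sq, PiLp.inner_apply]
    exact Finset.sum_congr rfl fun k _ => by simp [hw, sq]
  obtain ⟨a, ha⟩ := (Submodule.mem_span_range_iff_exists_fun ℝ).1 hPvS
  set aE : EuclideanSpace ℝ (Fin r) := WithLp.toLp 2 a with haEdef
  have hinner_col_v : ∀ k, ⟪col k, vΩ⟫_ℝ = w k := fun k => by
    rw [PiLp.inner_apply]
    exact Finset.sum_congr rfl fun j _ => by simp [hcol, hvΩ, mul_comm]
  have hinner_col_col : ∀ k l, ⟪col k, col l⟫_ℝ = G k l := fun k l => by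
    rw [PiLp.inner_apply]
    simp [hG, Matrix.mul_apply, subMat, hcol, mul_comm]
  have hGa : G.mulVec a = WithLp.ofLp w := by
    funext k
    have h0 : ⟪col k, vΩ - Pv⟫_ℝ = 0 :=
      (Submodule.mem_orthogonal S _).1 hperp (col k) (hcolS k)
    have h1 : ⟪col k, Pv⟫_ℝ = ⟪col k, vΩ⟫_ℝ := by
      have := inner_sub_right (𝕜 := ℝ) (col k) vΩ Pv
      rw [h0] at this; linarith
    have h2 : ⟪col k, Pv⟫_ℝ = (G.mulVec a) k := by
      rw [← ha, inner_sum]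
      simp only [real_inner_smul_right, hinner_col_col]
      rw [Matrix.mulVec, dotProduct]
      exact Finset.sum_congr rfl fun l _ => mul_comm _ _
    rw [← h2, h1, hinner_col_v]
  have haw : a = G⁻¹.mulVec (WithLp.ofLp w) := by
    rw [← hGa, Matrix.mulVec_mulVec, Matrix.nonsing_inv_mul G hGdet, Matrix.one_mulVec]
  -- ‖Pv‖² = ⟪w, a⟫
  have hPvsq : ‖Pv‖ ^ 2 = ⟪w, aE⟫_ℝ := by
    have h3 : ⟪vΩ, Pv⟫_ℝ = ‖Pv‖ ^ 2 := by
      have := inner_sub_left (𝕜 := ℝ) vΩ Pv Pv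
      rw [hinnerPv, real_inner_self_eq_norm_sq] at this
      linarith
    rw [← h3, ← ha, inner_sum]
    rw [PiLp.inner_apply]
    simp only [real_inner_smul_right, RCLike.inner_apply, conj_trivial, PiLp.toLp_apply]
    refine Finset.sum_congr rfl fun k _ => ?_
    rw [real_inner_comm, hinner_col_v]
  -- a = toEuclideanLin G⁻¹ w as Euclidean vectors
  have haE : aE = Matrix.toEuclideanLin G⁻¹ w := by rw [haEdef, haw]; rfl
  have hbound : ‖Pv‖ ^ 2 ≤ specNorm G⁻¹ * ‖w‖ ^ 2 := by
    have h4 : ⟪w, aE⟫_ℝ ≤ ‖w‖ * ‖aE‖ :=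
      real_inner_le_norm _ _
    have h5 : ‖aE‖ ≤ specNorm G⁻¹ * ‖w‖ := by
      rw [haE]
      exact (Matrix.toEuclideanLin G⁻¹).toContinuousLinearMap.le_opNorm w
    calc ‖Pv‖ ^ 2 = ⟪w, aE⟫_ℝ := hPvsq
      _ ≤ ‖w‖ * ‖aE‖ := h4
      _ ≤ ‖w‖ * (specNorm G⁻¹ * ‖w‖) :=
          mul_le_mul_of_nonneg_left h5 (norm_nonneg _)
      _ = specNorm G⁻¹ * ‖w‖ ^ 2 := by ring
  have hmain : projResidSq U y Ω = ‖vΩ‖ ^ 2 - ‖Pv‖ ^ 2 := by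
    rw [hres, hresid]; linarith [hpyth]
  constructor
  · rw [hmain, ← hnv, ← hnw]; linarith
  · rw [hmain, ← hnv]; nlinarith [norm_nonneg Pv, sq_nonneg ‖Pv‖]
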